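/- For every nonnegative integer n, Q_6^2(n) ≡ b_6(n) (mod 2), where b_6(n) is the number of partitions of n with no parts divisible by 6. -/

import Mathlib

/-- `Q t s n` is the number of partitions of `n` into distinct parts such that
no part is congruent to `s` or `t - s` modulo `t`. -/
noncomputable def Q (t s n : ℕ) : ℕ :=
  Nat.card {p : n.Partition // p.parts.Nodup ∧
    ∀ x ∈ p.parts, x % t ≠ s % t ∧ x % t ≠ (t - s) % t}

/-- `b6 n` is the number of partitions of `n` with no part divisible by 6. -/
noncomputable def b6 (n : ℕ) : ℕ :=
  Nat.card {p : n.Partition // ∀ x ∈ p.parts, ¬ (6 ∣ x)}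

/- Machinery inlined from Archive/Wiedijk100Theorems/Partition.lean -/

open PowerSeries

namespace Theorems100

noncomputable section

variable {α : Type*}

open Finset

open scoped Classical

/-- The partial product for the generating function for odd partitions.
TODO: As `m` tends to infinity, this converges (in the `X`-adic topology).

If `m` is sufficiently large, the `i`th coefficient gives the number of odd partitions of the
natural number `i`: proved in `oddGF_prop`.
It is stated for an arbitrary field `α`, though it usually suffices to use `ℚ` or `ℝ`.
-/
def partialOddGF (m : ℕ) [Field α] :=
  ∏ i ∈ range m, (1 - (X : PowerSeries α) ^ (2 * i + 1))⁻¹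

/-- The partial product for the generating function for distinct partitions.
TODO: As `m` tends to infinity, this converges (in the `X`-adic topology).

If `m` is sufficiently large, the `i`th coefficient gives the number of distinct partitions of the
natural number `i`: proved in `distinctGF_prop`.
It is stated for an arbitrary commutative semiring `α`, though it usually suffices to use `ℕ`, `ℚ`
or `ℝ`.
-/
def partialDistinctGF (m : ℕ) [CommSemiring α] :=
  ∏ i ∈ range m, (1 + (X : PowerSeries α) ^ (i + 1))

open Finset.HasAntidiagonal

universe u
variable {ι : Type u}

/-- A convenience constructor for the power series whose coefficients indicate a subset. -/
def indicatorSeries (α : Type*) [Semiring α] (s : Set ℕ) : PowerSeries α :=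
  PowerSeries.mk fun n => if n ∈ s then 1 else 0

theorem coeff_indicator (s : Set ℕ) [Semiring α] (n : ℕ) :
    coeff (R := α) n (indicatorSeries _ s) = if n ∈ s then 1 else 0 :=
  coeff_mk _ _

theorem coeff_indicator_pos (s : Set ℕ) [Semiring α] (n : ℕ) (h : n ∈ s) :
    coeff (R := α) n (indicatorSeries _ s) = 1 := by rw [coeff_indicator, if_pos h]

theorem coeff_indicator_neg (s : Set ℕ) [Semiring α] (n : ℕ) (h : n ∉ s) :
    coeff (R := α) n (indicatorSeries _ s) = 0 := by rw [coeff_indicator, if_neg h]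

theorem constantCoeff_indicator (s : Set ℕ) [Semiring α] :
    constantCoeff (R := α) (indicatorSeries _ s) = if 0 ∈ s then 1 else 0 :=
  rfl

theorem two_series (i : ℕ) [Semiring α] :
    1 + (X : PowerSeries α) ^ i.succ = indicatorSeries α {0, i.succ} := by
  ext n
  simp only [coeff_indicator, coeff_one, coeff_X_pow, Set.mem_insert_iff, Set.mem_singleton_iff,
    map_add]
  cases' n with d
  · simp [(Nat.succ_ne_zero i).symm]
  · simp [Nat.succ_ne_zero d]

theorem num_series' [Field α] (i : ℕ) :
    (1 - (X : PowerSeries α) ^ (i + 1))⁻¹ = indicatorSeries α {k | i + 1 ∣ k} := by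
  rw [PowerSeries.inv_eq_iff_mul_eq_one]
  · ext n
    cases n with
    | zero => simp [mul_sub, zero_pow, constantCoeff_indicator]
    | succ n =>
      simp only [coeff_one, if_false, mul_sub, mul_one, coeff_indicator,
        LinearMap.map_sub, reduceCtorEq]
      simp_rw [coeff_mul, coeff_X_pow, coeff_indicator, @boole_mul _ _ _ _]
      erw [@sum_ite _ _ _ _ _ (fun _ => Classical.propDecidable _), sum_ite]
      simp_rw [@filter_filter _ _ _ _ _, sum_const_zero, add_zero, sum_const, nsmul_eq_mul, mul_one,
        sub_eq_iff_eq_add, zero_add]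
      symm
      split_ifs with h
      · suffices #{a ∈ antidiagonal (n + 1) | i + 1 ∣ a.fst ∧ a.snd = i + 1} = 1 by
          simp only [Set.mem_setOf_eq]; convert congr_arg ((↑) : ℕ → α) this; norm_cast
        rw [card_eq_one]
        cases' h with p hp
        refine ⟨((i + 1) * (p - 1), i + 1), ?_⟩
        ext ⟨a₁, a₂⟩
        simp only [mem_filter, Prod.mk.injEq, HasAntidiagonal.mem_antidiagonal, mem_singleton]
        constructor
        · rintro ⟨a_left, ⟨a, rfl⟩, rfl⟩
          refine ⟨?_, rfl⟩
          rw [Nat.mul_sub_left_distrib, ← hp, ← a_left, mul_one, Nat.add_sub_cancel]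
        · rintro ⟨rfl, rfl⟩
          match p with
          | 0 => rw [mul_zero] at hp; cases hp
          | p + 1 => rw [hp]; simp [mul_add]
      · suffices #{a ∈ antidiagonal (n + 1) | i + 1 ∣ a.fst ∧ a.snd = i + 1} = 0 by
          simp only [Set.mem_setOf_eq]; convert congr_arg ((↑) : ℕ → α) this; norm_cast
        rw [card_eq_zero]
        apply eq_empty_of_forall_notMem
        simp only [Prod.forall, mem_filter, not_and, HasAntidiagonal.mem_antidiagonal]
        rintro _ h₁ h₂ ⟨a, rfl⟩ rfl
        apply h
        simp [← h₂]
  · simp [zero_pow]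

def mkOdd : ℕ ↪ ℕ :=
  ⟨fun i => 2 * i + 1, show Function.Injective (fun i : ℕ => 2 * i + 1) from fun x y h => by linarith⟩

-- The main workhorse of the partition theorem proof.
theorem partialGF_prop (α : Type*) [CommSemiring α] (n : ℕ) (s : Finset ℕ) (hs : ∀ i ∈ s, 0 < i)
    (c : ℕ → Set ℕ) (hc : ∀ i, i ∉ s → 0 ∈ c i) :
    #{p : n.Partition | (∀ j, p.parts.count j ∈ c j) ∧ ∀ j ∈ p.parts, j ∈ s} =
      coeff (R := α) n (∏ i ∈ s, indicatorSeries α ((· * i) '' c i)) := by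
  simp_rw [coeff_prod, coeff_indicator, prod_boole, sum_boole]
  apply congr_arg
  simp only [mem_univ, forall_true_left, not_and, not_forall, exists_prop,
    Set.mem_image, not_exists]
  set φ : (a : Nat.Partition n) →
    a ∈ filter (fun p ↦ (∀ (j : ℕ), Multiset.count j p.parts ∈ c j) ∧ ∀ j ∈ p.parts, j ∈ s) univ →
    ℕ →₀ ℕ := fun p _ => {
      toFun := fun i => Multiset.count i p.parts • i
      support := Finset.filter (fun i => i ≠ 0) p.parts.toFinset
      mem_support_toFun := fun a => by
        simp only [smul_eq_mul, ne_eq, mul_eq_zero, Multiset.count_eq_zero]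
        rw [not_or, not_not]
        simp only [Multiset.mem_toFinset, not_not, mem_filter] }
  refine Finset.card_bij φ ?_ ?_ ?_
  · intro a ha
    simp only [φ, not_forall, not_exists, not_and, exists_prop, mem_filter]
    rw [mem_finsuppAntidiag]
    dsimp only [ne_eq, smul_eq_mul, id_eq, eq_mpr_eq_cast, le_eq_subset, Finsupp.coe_mk]
    simp only [mem_univ, forall_true_left, not_and, not_forall, exists_prop,
      mem_filter, true_and] at ha
    refine ⟨⟨?_, fun i ↦ ?_⟩, fun i _ ↦ ⟨a.parts.count i, ha.1 i, rfl⟩⟩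
    · conv_rhs => simp [← a.parts_sum]
      rw [sum_multiset_count_of_subset _ s]
      · simp only [smul_eq_mul]
      · intro i
        simp only [Multiset.mem_toFinset, not_not, mem_filter]
        apply ha.2
    · simp only [ne_eq, Multiset.mem_toFinset, not_not, mem_filter, and_imp]
      exact fun hi _ ↦ ha.2 i hi
  · intro p₁ hp₁ p₂ hp₂ h
    apply Nat.Partition.ext
    simp only [true_and, mem_univ, mem_filter] at hp₁ hp₂
    ext i
    simp only [φ, ne_eq, Multiset.mem_toFinset, not_not, smul_eq_mul, Finsupp.mk.injEq] at h
    by_cases hi : i = 0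
    · rw [hi]
      rw [Multiset.count_eq_zero_of_notMem]
      · rw [Multiset.count_eq_zero_of_notMem]
        intro a; exact Nat.lt_irrefl 0 (hs 0 (hp₂.2 0 a))
      intro a; exact Nat.lt_irrefl 0 (hs 0 (hp₁.2 0 a))
    · rw [← mul_left_inj' hi]
      rw [funext_iff] at h
      exact h.2 i
  · simp only [φ, mem_filter, mem_finsuppAntidiag, mem_univ, exists_prop, true_and, and_assoc]
    rintro f ⟨hf, hf₃, hf₄⟩
    have hf' : f ∈ finsuppAntidiag s n := mem_finsuppAntidiag.mpr ⟨hf, hf₃⟩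
    simp only [mem_finsuppAntidiag] at hf'
    refine ⟨⟨∑ i ∈ s, Multiset.replicate (f i / i) i, ?_, ?_⟩, ?_, ?_, ?_⟩
    · intro i hi
      simp only [exists_prop, Multiset.mem_sum, mem_map, Function.Embedding.coeFn_mk] at hi
      rcases hi with ⟨t, ht, z⟩
      apply hs
      rwa [Multiset.eq_of_mem_replicate z]
    · simp_rw [Multiset.sum_sum, Multiset.sum_replicate, Nat.nsmul_eq_mul]
      rw [← hf'.1]
      refine sum_congr rfl fun i hi => Nat.div_mul_cancel ?_
      rcases hf₄ i hi with ⟨w, _, hw₂⟩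
      rw [← hw₂]
      exact dvd_mul_left _ _
    · intro i
      simp_rw [Multiset.count_sum', Multiset.count_replicate, sum_ite_eq']
      split_ifs with h
      · rcases hf₄ i h with ⟨w, hw₁, hw₂⟩
        rwa [← hw₂, Nat.mul_div_cancel _ (hs i h)]
      · exact hc _ h
    · intro i hi
      rw [Multiset.mem_sum] at hi
      rcases hi with ⟨j, hj₁, hj₂⟩
      rwa [Multiset.eq_of_mem_replicate hj₂]
    · ext i
      simp_rw [Multiset.count_sum', Multiset.count_replicate, sum_ite_eq']
      simp only [ne_eq, Multiset.mem_toFinset, not_not, smul_eq_mul, ite_mul,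
        zero_mul, Finsupp.coe_mk]
      split_ifs with h
      · apply Nat.div_mul_cancel
        rcases hf₄ i h with ⟨w, _, hw₂⟩
        apply Dvd.intro_left _ hw₂
      · apply symm
        rw [← Finsupp.notMem_support_iff]
        exact notMem_mono hf'.2 h

theorem partialOddGF_prop [Field α] (n m : ℕ) :
    #{p : n.Partition | ∀ j ∈ p.parts, j ∈ (range m).map mkOdd} = coeff (R := α) n (partialOddGF m) := by
  rw [partialOddGF]
  convert partialGF_prop α n
    ((range m).map mkOdd) _ (fun _ => Set.univ) (fun _ _ => trivial) using 2
  · congr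
    simp only [true_and, forall_const, Set.mem_univ]
  · rw [Finset.prod_map]
    simp_rw [num_series']
    congr! 2 with x
    ext k
    constructor
    · rintro ⟨p, rfl⟩
      refine ⟨p, ⟨⟩, ?_⟩
      apply mul_comm
    rintro ⟨a_w, -, rfl⟩
    apply Dvd.intro_left a_w rfl
  · intro i
    rw [mem_map]
    rintro ⟨a, -, rfl⟩
    exact Nat.succ_pos _

/-- If m is big enough, the partial product's coefficient counts the number of odd partitions -/
theorem oddGF_prop [Field α] (n m : ℕ) (h : n < m * 2) :
    #(Nat.Partition.odds n) = coeff (R := α) n (partialOddGF m) := by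
  rw [← partialOddGF_prop, Nat.Partition.odds]
  congr 2 with p
  simp only [Nat.Partition.restricted, mem_filter, mem_univ, true_and]
  apply forall₂_congr
  intro i hi
  have hin : i ≤ n := by
    simpa [p.parts_sum] using Multiset.single_le_sum (fun _ _ => Nat.zero_le _) _ hi
  simp only [mkOdd, exists_prop, mem_range, Function.Embedding.coeFn_mk, mem_map]
  constructor
  · intro hi₂
    have := Nat.mod_add_div i 2
    rw [Nat.not_even_iff] at hi₂
    rw [hi₂, add_comm] at this
    refine ⟨i / 2, ?_, this⟩
    rw [Nat.div_lt_iff_lt_mul zero_lt_two]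
    exact lt_of_le_of_lt hin h
  · rintro ⟨a, -, rfl⟩
    rw [even_iff_two_dvd]
    apply Nat.two_not_dvd_two_mul_add_one

theorem partialDistinctGF_prop [CommSemiring α] (n m : ℕ) :
    #{p : n.Partition |
        p.parts.Nodup ∧ ∀ j ∈ p.parts, j ∈ (range m).map ⟨Nat.succ, Nat.succ_injective⟩} =
      coeff (R := α) n (partialDistinctGF m) := by
  rw [partialDistinctGF]
  convert partialGF_prop α n
    ((range m).map ⟨Nat.succ, Nat.succ_injective⟩) _ (fun _ => {0, 1}) (fun _ _ => Or.inl rfl)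
    using 2
  · congr! with p
    rw [Multiset.nodup_iff_count_le_one]
    congr! 1 with i
    rcases Multiset.count i p.parts with (_ | _ | ms) <;> simp
  · simp_rw [Finset.prod_map, two_series]
    congr with i
    simp [Set.image_pair]
  · simp only [mem_map, Function.Embedding.coeFn_mk]
    rintro i ⟨_, _, rfl⟩
    apply Nat.succ_pos

/-- If m is big enough, the partial product's coefficient counts the number of distinct partitions
-/
theorem distinctGF_prop [CommSemiring α] (n m : ℕ) (h : n < m + 1) :
    #(Nat.Partition.distincts n) = coeff (R := α) n (partialDistinctGF m) := by
  rw [← partialDistinctGF_prop, Nat.Partition.distincts]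
  congr with p
  apply (and_iff_left _).symm
  intro i hi
  have : i ≤ n := by
    simpa [p.parts_sum] using Multiset.single_le_sum (fun _ _ => Nat.zero_le _) _ hi
  simp only [mkOdd, exists_prop, mem_range, Function.Embedding.coeFn_mk, mem_map]
  refine ⟨i - 1, ?_, Nat.succ_pred_eq_of_pos (p.parts_pos hi)⟩
  rw [tsub_lt_iff_right (Nat.one_le_iff_ne_zero.mpr (p.parts_pos hi).ne')]
  exact lt_of_le_of_lt this h

/-- The key proof idea for the partition theorem, showing that the generating functions for both
sequences are ultimately the same (since the factor converges to 0 as m tends to infinity).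
It's enough to not take the limit though, and just consider large enough `m`.
-/
theorem same_gf [Field α] (m : ℕ) :
    (partialOddGF m * (range m).prod fun i => 1 - (X : PowerSeries α) ^ (m + i + 1)) =
      partialDistinctGF m := by
  rw [partialOddGF, partialDistinctGF]
  induction' m with m ih
  · simp
  set! π₀ : PowerSeries α := ∏ i ∈ range m, (1 - X ^ (m + 1 + i + 1)) with hπ₀
  set! π₁ : PowerSeries α := ∏ i ∈ range m, (1 - X ^ (2 * i + 1))⁻¹ with hπ₁
  set! π₂ : PowerSeries α := ∏ i ∈ range m, (1 - X ^ (m + i + 1)) with hπ₂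
  set! π₃ : PowerSeries α := ∏ i ∈ range m, (1 + X ^ (i + 1)) with hπ₃
  rw [← hπ₃] at ih
  have h : constantCoeff (R := α) (1 - X ^ (2 * m + 1)) ≠ 0 := by
    rw [RingHom.map_sub, RingHom.map_pow, constantCoeff_one, constantCoeff_X,
      zero_pow (2 * m).succ_ne_zero, sub_zero]
    exact one_ne_zero
  calc
    (∏ i ∈ range (m + 1), (1 - X ^ (2 * i + 1))⁻¹) *
          ∏ i ∈ range (m + 1), (1 - X ^ (m + 1 + i + 1)) =
        π₁ * (1 - X ^ (2 * m + 1))⁻¹ * (π₀ * (1 - X ^ (m + 1 + m + 1))) := by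
      rw [prod_range_succ _ m, ← hπ₁, prod_range_succ _ m, ← hπ₀]
    _ = π₁ * (1 - X ^ (2 * m + 1))⁻¹ * (π₀ * ((1 + X ^ (m + 1)) * (1 - X ^ (m + 1)))) := by
      rw [← sq_sub_sq, one_pow, add_assoc _ m 1, ← two_mul (m + 1), pow_mul']
    _ = π₀ * (1 - X ^ (m + 1)) * (1 - X ^ (2 * m + 1))⁻¹ * (π₁ * (1 + X ^ (m + 1))) := by ring
    _ =
        (∏ i ∈ range (m + 1), (1 - X ^ (m + 1 + i))) * (1 - X ^ (2 * m + 1))⁻¹ *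
          (π₁ * (1 + X ^ (m + 1))) := by
      rw [prod_range_succ', add_zero, hπ₀]; simp_rw [← add_assoc]
    _ = π₂ * (1 - X ^ (m + 1 + m)) * (1 - X ^ (2 * m + 1))⁻¹ * (π₁ * (1 + X ^ (m + 1))) := by
      rw [add_right_comm, hπ₂, ← prod_range_succ]; simp_rw [add_right_comm]
    _ = π₂ * (1 - X ^ (2 * m + 1)) * (1 - X ^ (2 * m + 1))⁻¹ * (π₁ * (1 + X ^ (m + 1))) := by
      rw [two_mul, add_right_comm _ m 1]
    _ = (1 - X ^ (2 * m + 1)) * (1 - X ^ (2 * m + 1))⁻¹ * π₂ * (π₁ * (1 + X ^ (m + 1))) := by ring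
    _ = π₂ * (π₁ * (1 + X ^ (m + 1))) := by rw [PowerSeries.mul_inv_cancel _ h, one_mul]
    _ = π₁ * π₂ * (1 + X ^ (m + 1)) := by ring
    _ = π₃ * (1 + X ^ (m + 1)) := by rw [ih]
    _ = _ := by rw [prod_range_succ]

theorem same_coeffs [Field α] (m n : ℕ) (h : n ≤ m) :
    coeff (R := α) n (partialOddGF m) = coeff (R := α) n (partialDistinctGF m) := by
  rw [← same_gf, coeff_mul_prod_one_sub_of_lt_order]
  rintro i -
  rw [order_X_pow]
  exact mod_cast Nat.lt_succ_of_le (le_add_right h)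


/-! ### New material for `stmt6` -/

open PowerSeries Finset

/-- abbreviation for the coefficient field -/
abbrev K2 : Type := ZMod 2

lemma negEq (f : PowerSeries K2) : -f = f := by
  have h : (-1 : PowerSeries K2) = 1 := by
    rw [← map_one (C (R := K2)), ← map_neg]
    congr 1
  rw [← neg_one_mul, h, one_mul]

lemma oneSub (k : ℕ) : (1 - X ^ k : PowerSeries K2) = 1 + X ^ k := by
  rw [sub_eq_add_neg, negEq]

/-- embedding `i ↦ 6 * (i + 1)` -/
def mkSix : ℕ ↪ ℕ := ⟨fun i => 6 * (i + 1),
  show Function.Injective (fun i : ℕ => 6 * (i + 1)) from fun x y h => by simpa using h⟩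

/-- allowed parts for `Q 6 2`: odd numbers `< 12m` and multiples of 6 that are `≤ 6m` -/
def sQ (m : ℕ) : Finset ℕ := ((range (6 * m)).map mkOdd) ∪ ((range m).map mkSix)

/-- allowed parts for `b6`: numbers in `[1, 6m]` not divisible by 6 -/
def sB (m : ℕ) : Finset ℕ :=
  (((range (6 * m)).map ⟨Nat.succ, Nat.succ_injective⟩).filter fun i => ¬ (6 ∣ i))

lemma mem_sQ (m x : ℕ) : x ∈ sQ m ↔ (∃ a < 6 * m, 2 * a + 1 = x) ∨ ∃ a < m, 6 * (a + 1) = x := by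
  simp [sQ, mkOdd, mkSix]

lemma mem_sB (m x : ℕ) : x ∈ sB m ↔ (∃ a < 6 * m, a + 1 = x) ∧ ¬ (6 ∣ x) := by
  simp [sB, Nat.succ_eq_add_one]

lemma sQ_pos (m : ℕ) : ∀ i ∈ sQ m, 0 < i := by
  intro i hi
  rw [mem_sQ] at hi
  rcases hi with ⟨a, -, rfl⟩ | ⟨a, -, rfl⟩ <;> omega

lemma sB_pos (m : ℕ) : ∀ i ∈ sB m, 0 < i := by
  intro i hi
  rw [mem_sB] at hi
  obtain ⟨⟨a, -, rfl⟩, -⟩ := hi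
  omega

lemma one_add_X_pow_eq_indicator {α : Type*} [Semiring α] {i : ℕ} (hi : 0 < i) :
    1 + (X : PowerSeries α) ^ i = indicatorSeries α ((· * i) '' {0, 1}) := by
  obtain ⟨j, rfl⟩ := Nat.exists_eq_succ_of_ne_zero hi.ne'
  have h2 := two_series (α := α) j
  simp only [Nat.succ_eq_add_one] at h2
  rw [h2]
  apply congr_arg
  rw [Set.image_pair]
  simp

lemma one_sub_X_pow_inv_eq_indicator {i : ℕ} (hi : 0 < i) :
    ((1 : PowerSeries K2) - X ^ i)⁻¹ = indicatorSeries K2 ((· * i) '' Set.univ) := by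
  obtain ⟨j, rfl⟩ := Nat.exists_eq_succ_of_ne_zero hi.ne'
  have h2 := num_series' (α := K2) j
  simp only [Nat.succ_eq_add_one] at h2 ⊢
  rw [h2]
  apply congr_arg
  ext k
  simp only [Set.mem_setOf_eq, Set.image_univ, Set.mem_range]
  constructor
  · rintro ⟨c, rfl⟩
    exact ⟨c, by ring⟩
  · rintro ⟨c, rfl⟩
    exact ⟨c, by ring⟩

/-- Counting side for `Q 6 2 n`. -/
lemma Qcount (n m : ℕ) (h : n < 6 * m) :
    ((Q 6 2 n : ℕ) : K2) = coeff (R := K2) n (∏ i ∈ sQ m, (1 + X ^ i)) := by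
  have hQ : Q 6 2 n =
      #{p : n.Partition | (∀ j, p.parts.count j ∈ ({0, 1} : Set ℕ)) ∧
        ∀ j ∈ p.parts, j ∈ sQ m} := by
    rw [Q, Nat.card_eq_fintype_card, Fintype.card_subtype]
    congr 1
    apply Finset.filter_congr
    intro p _
    constructor
    · rintro ⟨hnd, hmod⟩
      constructor
      · intro j
        have := Multiset.nodup_iff_count_le_one.mp hnd j
        simp only [Set.mem_insert_iff, Set.mem_singleton_iff]
        omega
      · intro j hj
        have hj1 : 0 < j := p.parts_pos hj
        have hj2 : j ≤ n := by
          simpa [p.parts_sum] using Multiset.single_le_sum (fun _ _ => Nat.zero_le _) _ hj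
        have h6 := hmod j hj
        norm_num at h6
        rw [mem_sQ]
        by_cases hodd : j % 2 = 1
        · exact Or.inl ⟨j / 2, by omega, by omega⟩
        · exact Or.inr ⟨j / 6 - 1, by omega, by omega⟩
    · rintro ⟨hcnt, hmem⟩
      constructor
      · rw [Multiset.nodup_iff_count_le_one]
        intro j
        have := hcnt j
        simp only [Set.mem_insert_iff, Set.mem_singleton_iff] at this
        omega
      · intro x hx
        have hm := hmem x hx
        rw [mem_sQ] at hm
        norm_num
        rcases hm with ⟨a, -, rfl⟩ | ⟨a, -, rfl⟩ <;> omega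
  rw [hQ]
  rw [partialGF_prop K2 n (sQ m) (sQ_pos m) (fun _ => {0, 1}) (fun _ _ => Or.inl rfl)]
  apply congr_arg
  apply Finset.prod_congr rfl
  intro i hi
  exact (one_add_X_pow_eq_indicator (sQ_pos m i hi)).symm

/-- Counting side for `b6 n`. -/
lemma Bcount (n m : ℕ) (h : n < 6 * m) :
    ((b6 n : ℕ) : K2) = coeff (R := K2) n (∏ i ∈ sB m, (1 - X ^ i)⁻¹) := by
  have hB : b6 n =
      #{p : n.Partition | (∀ j, p.parts.count j ∈ (Set.univ : Set ℕ)) ∧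
        ∀ j ∈ p.parts, j ∈ sB m} := by
    rw [b6, Nat.card_eq_fintype_card, Fintype.card_subtype]
    congr 1
    apply Finset.filter_congr
    intro p _
    constructor
    · intro hp
      refine ⟨fun _ => trivial, fun j hj => ?_⟩
      have hj1 : 0 < j := p.parts_pos hj
      have hj2 : j ≤ n := by
        simpa [p.parts_sum] using Multiset.single_le_sum (fun _ _ => Nat.zero_le _) _ hj
      rw [mem_sB]
      exact ⟨⟨j - 1, by omega, by omega⟩, hp j hj⟩
    · rintro ⟨-, hmem⟩
      intro x hx
      have hm := hmem x hx
      rw [mem_sB] at hm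
      exact hm.2
  rw [hB]
  rw [partialGF_prop K2 n (sB m) (sB_pos m) (fun _ => Set.univ) (fun _ _ => trivial)]
  apply congr_arg
  apply Finset.prod_congr rfl
  intro i hi
  exact (one_sub_X_pow_inv_eq_indicator (sB_pos m i hi)).symm

/-- The six-multiples in `[1, 6m]`. -/
lemma filter_six (m : ℕ) :
    (((range (6 * m)).map ⟨Nat.succ, Nat.succ_injective⟩).filter fun i => (6 ∣ i)) =
      (range m).map mkSix := by
  ext x
  simp only [Finset.mem_filter, Finset.mem_map, Finset.mem_range, mkSix,
    Function.Embedding.coeFn_mk, Nat.succ_eq_add_one]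
  constructor
  · rintro ⟨⟨a, ha, rfl⟩, hdvd⟩
    exact ⟨(a + 1) / 6 - 1, by omega, by omega⟩
  · rintro ⟨a, ha, rfl⟩
    exact ⟨⟨6 * (a + 1) - 1, by omega, by omega⟩, by omega⟩

/-- Euler's identity mod 2 : `∏ (1+X^{2i+1}) * ∏ (1+X^{i+1}) = ∏ (1 - X^{M+i+1})`. -/
lemma euler_mod_two (M : ℕ) :
    (∏ i ∈ range M, (1 + (X : PowerSeries K2) ^ (2 * i + 1))) * partialDistinctGF M =
      ∏ i ∈ range M, (1 - X ^ (M + i + 1)) := by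
  have hgf := same_gf (α := K2) M
  have hone : (∏ i ∈ range M, (1 - (X : PowerSeries K2) ^ (2 * i + 1))) * partialOddGF M = 1 := by
    rw [partialOddGF, ← Finset.prod_mul_distrib]
    rw [Finset.prod_eq_one]
    intro i _
    apply PowerSeries.mul_inv_cancel
    rw [RingHom.map_sub, RingHom.map_pow, constantCoeff_one, constantCoeff_X,
      zero_pow (2 * i).succ_ne_zero, sub_zero]
    exact one_ne_zero
  calc (∏ i ∈ range M, (1 + (X : PowerSeries K2) ^ (2 * i + 1))) * partialDistinctGF M
      = (∏ i ∈ range M, (1 - (X : PowerSeries K2) ^ (2 * i + 1))) *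
        (partialOddGF M * ∏ i ∈ range M, (1 - X ^ (M + i + 1))) := by
        rw [hgf]
        congr 1
        exact Finset.prod_congr rfl fun i _ => (oneSub _).symm
    _ = ((∏ i ∈ range M, (1 - (X : PowerSeries K2) ^ (2 * i + 1))) * partialOddGF M) *
        ∏ i ∈ range M, (1 - X ^ (M + i + 1)) := by ring
    _ = ∏ i ∈ range M, (1 - X ^ (M + i + 1)) := by rw [hone, one_mul]

lemma coeff_mul_congr {f g h : PowerSeries K2} (n : ℕ)
    (H : ∀ k ≤ n, coeff (R := K2) k f = coeff (R := K2) k g) :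
    coeff (R := K2) n (f * h) = coeff (R := K2) n (g * h) := by
  rw [coeff_mul, coeff_mul]
  apply Finset.sum_congr rfl
  intro x hx
  rw [Finset.HasAntidiagonal.mem_antidiagonal] at hx
  rw [H x.1 (by omega)]

theorem stmt6' (n : ℕ) : Q 6 2 n ≡ b6 n [MOD 2] := by
  rw [← ZMod.natCast_eq_natCast_iff]
  set m : ℕ := n + 1 with hm
  have hnm : n < 6 * m := by omega
  rw [Qcount n m hnm, Bcount n m hnm]
  set A : PowerSeries K2 := ∏ i ∈ sQ m, (1 + X ^ i) with hA
  set B : PowerSeries K2 := ∏ i ∈ sB m, (1 - X ^ i)⁻¹ with hB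
  set Cc : PowerSeries K2 := ∏ i ∈ sB m, (1 - X ^ i) with hC
  have hCB : Cc * B = 1 := by
    rw [hC, hB, ← Finset.prod_mul_distrib]
    rw [Finset.prod_eq_one]
    intro i hi
    apply PowerSeries.mul_inv_cancel
    rw [RingHom.map_sub, RingHom.map_pow, constantCoeff_one, constantCoeff_X,
      zero_pow (sB_pos m i hi).ne', sub_zero]
    exact one_ne_zero
  have hAC : A * Cc = ∏ i ∈ range (6 * m), (1 - X ^ (6 * m + i + 1)) := by
    have hdisj : Disjoint ((range (6 * m)).map mkOdd) ((range m).map mkSix) := by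
      simp only [Finset.disjoint_left, Finset.mem_map, Finset.mem_range, mkOdd, mkSix,
        Function.Embedding.coeFn_mk]
      rintro x ⟨a, -, rfl⟩ ⟨b, -, hb⟩
      omega
    have hAsplit : A = (∏ i ∈ range (6 * m), (1 + (X : PowerSeries K2) ^ (2 * i + 1))) *
        ∏ i ∈ range m, (1 + (X : PowerSeries K2) ^ (6 * (i + 1))) := by
      rw [hA, sQ, Finset.prod_union hdisj, Finset.prod_map, Finset.prod_map]
      rfl
    have hCsix : (∏ i ∈ range m, (1 + (X : PowerSeries K2) ^ (6 * (i + 1)))) * Cc =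
        partialDistinctGF (6 * m) := by
      have hCc : Cc = ∏ i ∈ (((range (6 * m)).map ⟨Nat.succ, Nat.succ_injective⟩).filter
          fun i => ¬ (6 ∣ i)), (1 + (X : PowerSeries K2) ^ i) := by
        rw [hC, sB]
        exact Finset.prod_congr rfl fun i _ => oneSub i
      have hsix : (∏ i ∈ range m, (1 + (X : PowerSeries K2) ^ (6 * (i + 1)))) =
          ∏ i ∈ (((range (6 * m)).map ⟨Nat.succ, Nat.succ_injective⟩).filter fun i => (6 ∣ i)),
            (1 + (X : PowerSeries K2) ^ i) := by
        rw [filter_six, Finset.prod_map]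
        rfl
      rw [hCc, hsix]
      rw [Finset.prod_filter_mul_prod_filter_not
        ((range (6 * m)).map ⟨Nat.succ, Nat.succ_injective⟩) (fun i => (6 ∣ i))
        (fun i => (1 + (X : PowerSeries K2) ^ i))]
      rw [partialDistinctGF, Finset.prod_map]
      rfl
    rw [hAsplit, mul_assoc, hCsix, euler_mod_two]
  have hkey : ∀ k ≤ n, coeff (R := K2) k (A * Cc) = coeff (R := K2) k (1 : PowerSeries K2) := by
    intro k hk
    rw [hAC, ← one_mul (∏ i ∈ range (6 * m), (1 - (X : PowerSeries K2) ^ (6 * m + i + 1)))]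
    rw [coeff_mul_prod_one_sub_of_lt_order]
    rintro i -
    rw [order_X_pow]
    exact_mod_cast by omega
  calc coeff (R := K2) n A = coeff (R := K2) n (A * (Cc * B)) := by rw [hCB, mul_one]
    _ = coeff (R := K2) n ((A * Cc) * B) := by rw [mul_assoc]
    _ = coeff (R := K2) n ((1 : PowerSeries K2) * B) := coeff_mul_congr n hkey
    _ = coeff (R := K2) n B := by rw [one_mul]

end

end Theorems100

theorem stmt6 (n : ℕ) : Q 6 2 n ≡ b6 n [MOD 2] :=
  Theorems100.stmt6' n
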